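/- Let G be a finite group and φ ∈ End(G) a nilpotent endomorphism with nullity index n (the least n with φ⁽ⁿ⁾(G) = {1}) such that |ker φ| = p for a prime p. Then φ⁽ⁱ⁾(G) = ker φ⁽ⁿ⁻ⁱ⁾ for all 0 ≤ i ≤ n. -/

import Mathlib

private lemma subgroup_eq_of_le_of_card_le' {G : Type*} [Group G] [Finite G] {H K : Subgroup G}
    (h : H ≤ K) (hc : Nat.card K ≤ Nat.card H) : H = K := by
  apply SetLike.coe_injective
  apply Set.eq_of_subset_of_ncard_le h
  rwa [← Nat.card_coe_set_eq, ← Nat.card_coe_set_eq]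

private lemma card_range_mul_card_ker' {G H : Type*} [Group G] [Group H] [Finite G]
    (f : G →* H) : Nat.card f.range * Nat.card f.ker = Nat.card G := by
  rw [← Nat.card_congr (QuotientGroup.quotientKerEquivRange f).toEquiv]
  exact (Subgroup.card_eq_card_quotient_mul_card_subgroup f.ker).symm

theorem image_eq_kernel_of_nilpotent {G : Type*} [Group G] [Finite G] (φ : G →* G)
    (n p : ℕ) (hp : p.Prime)
    (hn : ∀ g : G, (⇑φ)^[n] g = 1)
    (hmin : ∀ m < n, ∃ g : G, (⇑φ)^[m] g ≠ 1)
    (hker : Nat.card φ.ker = p) :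
    ∀ i ≤ n, Set.range ((⇑φ)^[i]) = {g : G | (⇑φ)^[n - i] g = 1} := by
  set ψ : Monoid.End G := φ with hψ
  set R : ℕ → Subgroup G := fun j => (ψ ^ j : Monoid.End G).range with hR
  set K : ℕ → Subgroup G := fun j => (ψ ^ j : Monoid.End G).ker with hK
  have hcoe : ∀ j : ℕ, ⇑(ψ ^ j) = (⇑φ)^[j] := fun j => rfl
  have hmapR : ∀ j : ℕ, R (j + 1) = (R j).map φ := by
    intro j
    have : (ψ ^ (j + 1) : Monoid.End G) = (ψ : G →* G).comp (ψ ^ j : Monoid.End G) := by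
      rw [pow_succ']; rfl
    simp only [hR, this]
    exact MonoidHom.range_comp _ _
  have hmono : ∀ j : ℕ, R (j + 1) ≤ R j := by
    intro j x hx
    obtain ⟨y, rfl⟩ := hx
    exact ⟨φ y, (Function.iterate_succ_apply (⇑φ) j y).symm⟩
  have hRn : R n = ⊥ := by
    rw [eq_bot_iff]
    rintro x ⟨y, rfl⟩
    exact hn y
  -- ker φ ≤ R j for all j < n
  have hkerle : ∀ j < n, φ.ker ≤ R j := by
    intro j hj
    by_contra hcon
    have hinf : φ.ker ⊓ R j = ⊥ := by
      have hdvd : Nat.card (φ.ker ⊓ R j : Subgroup G) ∣ p := by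
        rw [← hker]; exact Subgroup.card_dvd_of_le inf_le_left
      rcases (Nat.Prime.eq_one_or_self_of_dvd hp _ hdvd) with h1 | h2
      · exact Subgroup.card_eq_one.mp h1
      · exfalso
        apply hcon
        have : φ.ker ⊓ R j = φ.ker :=
          subgroup_eq_of_le_of_card_le' inf_le_left (by rw [h2, hker])
        rw [← this]; exact fun x hx => (this ▸ hx : x ∈ φ.ker ⊓ R j).2
    -- φ is injective on R j, so R (j+1) = R j
    have hinj : Set.InjOn φ (R j : Set G) := by
      intro a ha b hb hab
      have ha' : a ∈ R j := ha
      have hb' : b ∈ R j := hb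
      have : a * b⁻¹ ∈ φ.ker ⊓ R j :=
        Subgroup.mem_inf.mpr ⟨by simp [MonoidHom.mem_ker, hab], mul_mem ha' (inv_mem hb')⟩
      rw [hinf, Subgroup.mem_bot] at this
      exact mul_inv_eq_one.mp this
    have hcard : Nat.card (R (j+1)) = Nat.card (R j) := by
      rw [hmapR j]
      calc Nat.card ((R j).map φ) = Nat.card (φ '' (R j : Set G)) := rfl
        _ = Nat.card (R j : Set G) := Nat.card_image_of_injOn hinj
        _ = Nat.card (R j) := rfl
    have heq : R (j + 1) = R j :=
      subgroup_eq_of_le_of_card_le' (hmono j) (le_of_eq hcard.symm)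
    have hstab : ∀ k : ℕ, R (j + k) = R j := by
      intro k
      induction k with
      | zero => rfl
      | succ k ih =>
        have : j + (k + 1) = (j + k) + 1 := by ring
        rw [this, hmapR (j + k), ih, ← hmapR j, heq]
    obtain ⟨g, hg⟩ := hmin j hj
    apply hg
    have : (⇑φ)^[j] g ∈ R j := ⟨g, rfl⟩
    rw [← hstab (n - j), Nat.add_sub_cancel' (le_of_lt hj), hRn, Subgroup.mem_bot] at this
    exact this
  -- card (R (j+1)) * p = card (R j) for j < n
  have hstep : ∀ j < n, Nat.card (R (j + 1)) * p = Nat.card (R j) := by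
    intro j hj
    set f : (R j) →* G := φ.comp (R j).subtype with hf
    have hfrange : f.range = R (j + 1) := by
      rw [hf, MonoidHom.range_comp, Subgroup.range_subtype, ← hmapR]
    have hfker : Nat.card f.ker = p := by
      rw [← hker]
      have : f.ker = φ.ker.subgroupOf (R j) := rfl
      rw [this]
      exact Nat.card_congr (Subgroup.subgroupOfEquivOfLe (hkerle j hj)).toEquiv
    have := card_range_mul_card_ker' f
    rw [hfrange, hfker] at this
    exact this
  -- card (R j) * p^j = card G
  have hcardR : ∀ j, j ≤ n → Nat.card (R j) * p ^ j = Nat.card G := by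
    intro j
    induction j with
    | zero =>
      intro _
      have htop : R 0 = ⊤ := by
        rw [eq_top_iff]; intro x _; exact ⟨x, rfl⟩
      rw [htop, pow_zero, mul_one]
      exact Subgroup.card_top
    | succ j ih =>
      intro hj
      have hj' : j < n := hj
      rw [pow_succ', ← mul_assoc, hstep j hj', ih (le_of_lt hj')]
  have hG : Nat.card G = p ^ n := by
    have h := hcardR n le_rfl
    rw [hRn] at h
    simpa using h.symm
  have hRval : ∀ j, j ≤ n → Nat.card (R j) = p ^ (n - j) := by
    intro j hj
    have h := hcardR j hj
    rw [hG] at h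
    have h2 : p ^ (n - j) * p ^ j = p ^ n := by rw [← pow_add, Nat.sub_add_cancel hj]
    exact Nat.eq_of_mul_eq_mul_right (pow_pos hp.pos j) (h.trans h2.symm)
  have hKR : ∀ j : ℕ, Nat.card (R j) * Nat.card (K j) = Nat.card G :=
    fun j => card_range_mul_card_ker' (ψ ^ j : Monoid.End G)
  intro i hi
  have hKval : Nat.card (K (n - i)) = p ^ (n - i) := by
    have h := hKR (n - i)
    rw [hG, hRval (n - i) (Nat.sub_le n i), Nat.sub_sub_self hi] at h
    have h2 : p ^ i * p ^ (n - i) = p ^ n := by rw [← pow_add, Nat.add_sub_cancel' hi]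
    exact Nat.eq_of_mul_eq_mul_left (pow_pos hp.pos i) (h.trans h2.symm)
  have hle : R i ≤ K (n - i) := by
    rintro x ⟨y, rfl⟩
    show (⇑φ)^[n - i] ((⇑φ)^[i] y) = 1
    rw [← Function.iterate_add_apply, Nat.sub_add_cancel hi]
    exact hn y
  have heq : R i = K (n - i) :=
    subgroup_eq_of_le_of_card_le' hle (by rw [hKval, hRval i hi])
  have h1 : Set.range ((⇑φ)^[i]) = (R i : Set G) := rfl
  have h2 : (K (n - i) : Set G) = {g : G | (⇑φ)^[n - i] g = 1} := rfl
  rw [h1, heq, h2]
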